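/- Let f : ℝ^d → ℝ be differentiable, let β > 0, λ ≥ 0, and let x, m ∈ ℝ^d. Write s := 𝕀(m ⊙ x ≥ 0). Then ⟨β∇f(x) + λ s ⊙ m, −m − λ s ⊙ x⟩ + ⟨m + λ s ⊙ x, β(∇f(x) − m)⟩ = −⟨λ s + β·1, m ⊙ m⟩ − λ(β + λ)‖(m ⊙ x)^+‖₁ ≤ 0. In particular, H(x, m) = β f(x) + (1/2)‖m‖₂² + λ‖(m ⊙ x)^+‖₁ is a Lyapunov function for the continuous-time dynamics ẋ = −m − λ𝕀(m ⊙ x ≥ 0) ⊙ x, ṁ = β(∇f(x) − m) of SGD with momentum and cautious weight decay. -/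
import Mathlib


/-- Lyapunov derivative identity for SGD with momentum and cautious weight
decay: along `ẋ = -m - λ s ⊙ x`, `ṁ = β(∇f(x) - m)` with `s = 𝕀(m ⊙ x ≥ 0)`, the
derivative of `H(x,m) = β f(x) + ½‖m‖₂² + λ‖(m ⊙ x)⁺‖₁` equals
`-⟨λ s + β·1, m ⊙ m⟩ - λ(β+λ)‖(m ⊙ x)⁺‖₁ ≤ 0`. -/
theorem sgdm_cwd_lyapunov_derivative {d : ℕ} (f : (Fin d → ℝ) → ℝ)
    (grad : (Fin d → ℝ) → Fin d → ℝ)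
    (hgrad : ∀ p, HasFDerivAt f
      (∑ i, grad p i • (ContinuousLinearMap.proj i : (Fin d → ℝ) →L[ℝ] ℝ)) p)
    (β lam : ℝ) (hβ : 0 < β) (hlam : 0 ≤ lam) (x m : Fin d → ℝ)
    (s : Fin d → ℝ) (hs : ∀ i, s i = if 0 ≤ m i * x i then (1 : ℝ) else 0) :
    (∑ i, (β * grad x i + lam * s i * m i) * (-(m i) - lam * s i * x i))
        + (∑ i, (m i + lam * s i * x i) * (β * (grad x i - m i)))
      = -(∑ i, (lam * s i + β) * (m i * m i))
          - lam * (β + lam) * (∑ i, max (m i * x i) 0) ∧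
    -(∑ i, (lam * s i + β) * (m i * m i))
        - lam * (β + lam) * (∑ i, max (m i * x i) 0) ≤ 0 := by
  have key : ∀ i, (β * grad x i + lam * s i * m i) * (-(m i) - lam * s i * x i)
      + (m i + lam * s i * x i) * (β * (grad x i - m i))
      = -((lam * s i + β) * (m i * m i)) - lam * (β + lam) * max (m i * x i) 0 := by
    intro i
    rcases le_or_gt 0 (m i * x i) with h | h
    · rw [hs i, if_pos h, max_eq_left h]; ring
    · rw [hs i, if_neg (not_le.mpr h), max_eq_right h.le]; ring
  constructor
  · rw [← Finset.sum_add_distrib, Finset.sum_congr rfl (fun i _ => key i),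
      Finset.sum_sub_distrib, ← Finset.sum_neg_distrib, ← Finset.mul_sum]
  · have hA : 0 ≤ ∑ i, (lam * s i + β) * (m i * m i) := by
      refine Finset.sum_nonneg fun i _ => mul_nonneg ?_ (mul_self_nonneg _)
      have : 0 ≤ s i := by rw [hs i]; positivity
      nlinarith
    have hB : 0 ≤ lam * (β + lam) * ∑ i, max (m i * x i) 0 := by
      refine mul_nonneg (mul_nonneg hlam (by linarith)) ?_
      exact Finset.sum_nonneg fun i _ => le_max_right _ _
    linarith
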